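/- Let S be a safety specification given by a complete deterministic safety automaton A = (Q, q_0, δ_A, Q_usf) over Σ = I ∪ O, and let P = (M, m_0, Δ) be a preMealy machine such that L(A) is P-realizable. Let (m, i) be a hole of P, o ∈ O, and m' ∈ M. If Post*_A(R_m, i·o) ⊆ R_{m'}, where R_m = { Post*_A(q_0, u) | u ∈ (IO)*, Post*_P(m_0, u) = m }, then L(A) is P'-realizable for the preMealy machine P' = (M, m_0, Δ ∪ {(m,i) ↦ (o,m')}) obtained from P by adding the transition (m,i) ↦ (o,m'). -/
import Mathlib


open scoped Classical

/-- A preMealy machine over input alphabet `I`, output alphabet `O`, with state type `M`. -/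
structure PreMealy (I O M : Type) where
  init : M
  trans : M → I → Option (O × M)

namespace PreMealy

variable {I O M : Type}

/-- One step of a preMealy machine on a pair (input, output): defined iff the transition
on the input is defined and produces exactly the given output. -/
noncomputable def step (P : PreMealy I O M) (m : M) (p : I × O) : Option M :=
  match P.trans m p.1 with
  | some (o, m') => if o = p.2 then some m' else none
  | none => none

/-- Running a preMealy machine on a finite word of (input, output) pairs. -/
noncomputable def runFrom (P : PreMealy I O M) : M → List (I × O) → Option M
  | m, [] => some m
  | m, p :: u =>
    match P.step m p with
    | some m' => runFrom P m' u
    | none => none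

/-- The language `L(P)` of finite words in `(I·O)*` accepted by `P`. -/
def lang (P : PreMealy I O M) : Set (List (I × O)) :=
  { u | (P.runFrom P.init u).isSome }

/-- The ω-language `L_ω(P)`: ω-words all of whose finite prefixes belong to `L(P)`. -/
def omegaLang (P : PreMealy I O M) : Set (ℕ → I × O) :=
  { w | ∀ n : ℕ, ((List.range n).map w) ∈ P.lang }

/-- `P` is a (complete) Mealy machine when its transition function is total. -/
def Total (P : PreMealy I O M) : Prop :=
  ∀ m i, (P.trans m i).isSome

/-- A hole of `P` is a pair (state, input) on which the transition is undefined. -/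
def Hole (P : PreMealy I O M) (m : M) (i : I) : Prop :=
  P.trans m i = none

/-- `Left_p`: the set of finite words reaching state `p` from the initial state. -/
def leftLang (P : PreMealy I O M) (p : M) : Set (List (I × O)) :=
  { u | P.runFrom P.init u = some p }

end PreMealy

/-- `P₁ ⪯ P₂`: `P₁` is a subgraph of `P₂`. -/
def Subgraph {I O M₁ M₂ : Type} (P₁ : PreMealy I O M₁) (P₂ : PreMealy I O M₂) : Prop :=
  ∃ Φ : M₁ → M₂, Function.Injective Φ ∧ Φ P₁.init = P₂.init ∧
    ∀ p i o q, P₁.trans p i = some (o, q) ↔ P₂.trans (Φ p) i = some (o, Φ q)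

/-- `S` is `P`-realizable: some (finite-state, complete) Mealy machine extends `P`
and its ω-language is included in `S ⊆ (I·O)^ω`. -/
def PRealizable {I O M : Type} (P : PreMealy I O M) (S : Set (ℕ → I × O)) : Prop :=
  ∃ (N : Type) (_ : Fintype N) (Mach : PreMealy I O N),
    Mach.Total ∧ Subgraph P Mach ∧ Mach.omegaLang ⊆ S

/-- Quotient (left derivative) of a set of ω-words by a finite word. -/
def wordQuot {α : Type} (u : List α) (S : Set (ℕ → α)) : Set (ℕ → α) :=
  { v | (fun n => if h : n < u.length then u.get ⟨n, h⟩ else v (n - u.length)) ∈ S }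

/-- Interleaving of an ω-word over `I × O` into an ω-word over `Σ = I ⊕ O`. -/
def interleave {I O : Type} (w : ℕ → I × O) : ℕ → I ⊕ O :=
  fun n => if n % 2 = 0 then Sum.inl (w (n / 2)).1 else Sum.inr (w (n / 2)).2

/-- Flattening of a finite word over `I × O` into a word over `Σ = I ⊕ O`. -/
def flattenWord {I O : Type} (u : List (I × O)) : List (I ⊕ O) :=
  u.flatMap fun p => [Sum.inl p.1, Sum.inr p.2]

/-- `P`-realizability of a specification over `Σ = I ⊕ O`. -/
def PRealizableSigma {I O M : Type} (P : PreMealy I O M) (S : Set (ℕ → I ⊕ O)) : Prop :=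
  ∃ (N : Type) (_ : Fintype N) (Mach : PreMealy I O N),
    Mach.Total ∧ Subgraph P Mach ∧ ∀ w ∈ Mach.omegaLang, interleave w ∈ S

/-- Realizability of a specification over `Σ = I ⊕ O` by some Mealy machine. -/
def RealizableSigma (I O : Type) (S : Set (ℕ → I ⊕ O)) : Prop :=
  ∃ (N : Type) (_ : Fintype N) (Mach : PreMealy I O N),
    Mach.Total ∧ ∀ w ∈ Mach.omegaLang, interleave w ∈ S

/-- A universal coBüchi automaton; `col1 q` means state `q` has color 1. -/
structure UCB (σ Q : Type) where
  init : Set Q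
  δ : Q → σ → Set Q
  δ_ne : ∀ q a, (δ q a).Nonempty
  col1 : Q → Prop

namespace UCB

variable {σ Q : Type}

/-- `ρ` is a run of `A` on the ω-word `w`. -/
def Run (A : UCB σ Q) (w : ℕ → σ) (ρ : ℕ → Q) : Prop :=
  ρ 0 ∈ A.init ∧ ∀ n, ρ (n + 1) ∈ A.δ (ρ n) (w n)

/-- `L^∀_k(A)`: every run visits 1-colored states at most `k` times. -/
def langK (A : UCB σ Q) (k : ℕ) : Set (ℕ → σ) :=
  { w | ∀ ρ : ℕ → Q, A.Run w ρ →
      ∀ s : Finset ℕ, (∀ j ∈ s, A.col1 (ρ j)) → s.card ≤ k }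

/-- `L^∀(A)`: every run visits 1-colored states only finitely often. -/
def langForall (A : UCB σ Q) : Set (ℕ → σ) :=
  { w | ∀ ρ : ℕ → Q, A.Run w ρ → { j | A.col1 (ρ j) }.Finite }

/-- A run prefix of `A` on a finite word `p` (only `ρ 0, …, ρ p.length` are relevant). -/
def RunPrefix (A : UCB σ Q) (p : List σ) (ρ : ℕ → Q) : Prop :=
  ρ 0 ∈ A.init ∧ ∀ (j : ℕ) (h : j < p.length), ρ (j + 1) ∈ A.δ (ρ j) (p.get ⟨j, h⟩)

/-- The set of states reachable from a set of states while reading a finite word. -/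
def postSet (A : UCB σ Q) : Set Q → List σ → Set Q
  | S, [] => S
  | S, a :: u => postSet A (⋃ q ∈ S, A.δ q a) u

end UCB

/-- The set `CF(A,k)` of `k`-counting functions, as integer-valued functions. -/
def CFset (Q : Type) (k : ℕ) : Set (Q → ℤ) :=
  { f | ∀ q, -1 ≤ f q ∧ f q ≤ (k : ℤ) + 1 }

/-- The transition function `δ^D` of the determinization `D(A,k)` on counting functions. -/
noncomputable def detTransFun {σ Q : Type} [Fintype Q] (A : UCB σ Q) (k : ℕ)
    (f : Q → ℤ) (a : σ) : Q → ℤ := fun q =>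
  let pred : Finset Q := Finset.univ.filter fun q' => q ∈ A.δ q' a ∧ 0 ≤ f q'
  if h : pred.Nonempty then
    min (pred.sup' h f + (if A.col1 q then 1 else 0)) ((k : ℤ) + 1)
  else -1

/-- The (unique) run of `D(A,k)` on an ω-word `w`, starting from `f`. -/
noncomputable def detRun {σ Q : Type} [Fintype Q] (A : UCB σ Q) (k : ℕ)
    (f : Q → ℤ) (w : ℕ → σ) : ℕ → Q → ℤ
  | 0 => f
  | n + 1 => detTransFun A k (detRun A k f w n) (w n)

/-- The state of `D(A,k)` reached from `f` after reading a finite word. -/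
noncomputable def detPostW {σ Q : Type} [Fintype Q] (A : UCB σ Q) (k : ℕ) :
    (Q → ℤ) → List σ → Q → ℤ
  | f, [] => f
  | f, a :: u => detPostW A k (detTransFun A k f a) u

/-- The initial counting function `f₀` of `D(A,k)`. -/
noncomputable def initCF {σ Q : Type} (A : UCB σ Q) : Q → ℤ := fun q =>
  if q ∈ A.init then (if A.col1 q then 1 else 0) else -1

/-- `L(D(A,k)[f])`: ω-words whose run of `D(A,k)` from `f` never visits an unsafe
counting function (one taking the value `k+1`). -/
def langD {σ Q : Type} [Fintype Q] (A : UCB σ Q) (k : ℕ) (f : Q → ℤ) :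
    Set (ℕ → σ) :=
  { w | ∀ n, ¬ ∃ q, detRun A k f w n q = (k : ℤ) + 1 }

/-- A complete deterministic safety automaton: the set `bad` of unsafe states is a trap. -/
structure DetSafety (σ Q : Type) where
  start : Q
  δ : Q → σ → Q
  bad : Set Q
  trap : ∀ q ∈ bad, ∀ a, δ q a ∈ bad

namespace DetSafety

variable {σ Q : Type}

/-- State reached after reading a finite word. -/
def postW (A : DetSafety σ Q) : Q → List σ → Q
  | q, [] => q
  | q, a :: u => postW A (A.δ q a) u

/-- The run of a deterministic automaton on an ω-word. -/
def runOn (A : DetSafety σ Q) (w : ℕ → σ) : ℕ → Q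
  | 0 => A.start
  | n + 1 => A.δ (runOn A w n) (w n)

/-- The (safety) ω-language: the run never enters an unsafe state. -/
def omegaLang (A : DetSafety σ Q) : Set (ℕ → σ) :=
  { w | ∀ n, runOn A w n ∉ A.bad }

end DetSafety

/-- A complete deterministic automaton (no acceptance condition). -/
structure DetAuto (σ Q : Type) where
  start : Q
  δ : Q → σ → Q

/-- State reached after reading a finite word. -/
def DetAuto.postW {σ Q : Type} (A : DetAuto σ Q) : Q → List σ → Q
  | q, [] => q
  | q, a :: u => DetAuto.postW A (A.δ q a) u

/-- Domination order between collections: every element of `A` is below some element of `B`. -/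
def acLE {α : Type} (r : α → α → Prop) (A B : Set α) : Prop :=
  ∀ x ∈ A, ∃ y ∈ B, r x y

/-- Downward closure of a collection of subsets of `Y`. -/
def dcl {Y : Type} (A : Set (Set Y)) : Set (Set Y) :=
  { X | ∃ X' ∈ A, X ⊆ X' }

/-- The merged relation `U(∼, p)` for a non-congruent point with successors `s, s'`. -/
def Umerge {M : Type} (r : M → M → Prop) (s s' : M) : M → M → Prop :=
  fun y y' => r y y' ∨ (r y s ∧ r y' s') ∨ (r y' s ∧ r y s')

/-- Prefix closure of a set of finite words over `I × O`. -/
def prefsE {I O : Type} (E : Set (List (I × O))) : Set (List (I × O)) :=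
  { u | ∃ e ∈ E, u <+: e }

/-- Consistency of a set of examples: the output is uniquely determined by each
prefix ending with an input. -/
def ConsistentE {I O : Type} (E : Set (List (I × O))) : Prop :=
  ∀ (u : List (I × O)) (i : I) (o o' : O),
    (u ++ [(i, o)]) ∈ prefsE E → (u ++ [(i, o')]) ∈ prefsE E → o = o'

/-- The prefix-tree acceptor `PTA(E)`: states are the prefixes of `E` (together with ε). -/
noncomputable def PTA {I O : Type} (E : Set (List (I × O))) :
    PreMealy I O (↥(insert ([] : List (I × O)) (prefsE E))) where
  init := ⟨[], Set.mem_insert _ _⟩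
  trans := fun u i =>
    if h : ∃ o : O, (u.1 ++ [(i, o)]) ∈ prefsE E then
      some (h.choose, ⟨u.1 ++ [(i, h.choose)], Set.mem_insert_of_mem _ h.choose_spec⟩)
    else none

/-- The fixpoint labelling `F*` of the states of a preMealy machine by counting functions. -/
noncomputable def Fstar {I O M Q : Type} [Fintype Q] (P : PreMealy I O M)
    (A : UCB (I ⊕ O) Q) (k : ℕ) (m : M) : Q → ℤ := fun q =>
  sSup (insert (-1 : ℤ)
    { z | ∃ u ∈ P.leftLang m, detPostW A k (initCF A) (flattenWord u) q = z })

section Helpers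

variable {I O M Q : Type}

lemma runFrom_append (P : PreMealy I O M) (u v : List (I × O)) (s : M) :
    P.runFrom s (u ++ v) = (P.runFrom s u).bind (fun s' => P.runFrom s' v) := by
  induction u generalizing s with
  | nil => simp [PreMealy.runFrom]
  | cons p u ih =>
    simp only [List.cons_append, PreMealy.runFrom]
    cases h : P.step s p <;> simp [h, ih]

lemma postW_append (A : DetSafety (I ⊕ O) Q) (u v : List (I ⊕ O)) (q : Q) :
    A.postW q (u ++ v) = A.postW (A.postW q u) v := by
  induction u generalizing q with
  | nil => simp [DetSafety.postW]
  | cons a u ih => simp [DetSafety.postW, ih]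

lemma flattenWord_append (u v : List (I × O)) :
    flattenWord (u ++ v) = flattenWord u ++ flattenWord v := by
  simp [flattenWord]

lemma interleave_even (w : ℕ → I × O) (n : ℕ) :
    interleave w (2 * n) = Sum.inl (w n).1 := by
  simp [interleave, Nat.mul_mod_right, Nat.mul_div_cancel_left]

lemma interleave_odd (w : ℕ → I × O) (n : ℕ) :
    interleave w (2 * n + 1) = Sum.inr (w n).2 := by
  have h1 : (2 * n + 1) % 2 = 1 := by omega
  have h2 : (2 * n + 1) / 2 = n := by omega
  simp [interleave, h1, h2]

lemma runOn_two_mul (A : DetSafety (I ⊕ O) Q) (w : ℕ → I × O) (n : ℕ) :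
    A.runOn (interleave w) (2 * n)
      = A.postW A.start (flattenWord ((List.range n).map w)) := by
  induction n with
  | zero => simp [DetSafety.runOn, DetSafety.postW, flattenWord]
  | succ n ih =>
    have e : 2 * (n + 1) = (2 * n + 1) + 1 := by ring
    rw [e]
    simp only [DetSafety.runOn, interleave_odd, ih]
    have e2 : (2 * n + 1) = (2 * n) + 1 := rfl
    rw [List.range_succ, List.map_append, flattenWord_append, postW_append]
    simp [flattenWord, DetSafety.postW, interleave_even, interleave_odd]

lemma step_lift {N : Type} {P : PreMealy I O M} {Mach : PreMealy I O N} {Φ : M → N}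
    (hΦ : ∀ p i o q, P.trans p i = some (o, q) ↔ Mach.trans (Φ p) i = some (o, Φ q))
    {p q : M} {x : I × O} (h : P.step p x = some q) :
    Mach.step (Φ p) x = some (Φ q) := by
  unfold PreMealy.step at h ⊢
  cases ht : P.trans p x.1 with
  | none => rw [ht] at h; exact absurd h (by simp)
  | some oq =>
    rw [ht] at h
    obtain ⟨o', q'⟩ := oq
    simp only at h
    by_cases ho : o' = x.2
    · subst ho
      simp only [if_true, Option.some.injEq] at h
      subst h
      rw [(hΦ p x.1 x.2 q').mp ht]
      simp
    · simp [ho] at h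

lemma runFrom_lift {N : Type} {P : PreMealy I O M} {Mach : PreMealy I O N} {Φ : M → N}
    (hΦ : ∀ p i o q, P.trans p i = some (o, q) ↔ Mach.trans (Φ p) i = some (o, Φ q))
    (u : List (I × O)) :
    ∀ p q : M, P.runFrom p u = some q → Mach.runFrom (Φ p) u = some (Φ q) := by
  induction u with
  | nil => intro p q h; simp [PreMealy.runFrom] at h ⊢; rw [h]
  | cons x u ih =>
    intro p q h
    simp only [PreMealy.runFrom] at h ⊢
    cases hs : P.step p x with
    | none => rw [hs] at h; exact absurd h (by simp)
    | some p' =>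
      rw [hs] at h
      rw [step_lift hΦ hs]
      exact ih p' q h

/-- Every accepted finite word of a total machine extends to an accepted ω-word. -/
lemma exists_omega_extension [Nonempty I] {N : Type} (Mach : PreMealy I O N)
    (htot : Mach.Total) {v : List (I × O)} {n0 : N}
    (hv : Mach.runFrom Mach.init v = some n0) :
    ∃ w ∈ Mach.omegaLang, (List.range v.length).map w = v := by
  classical
  let i0 : I := Classical.arbitrary I
  -- state and pair sequences continuing from n0
  let F : N → (I × O) × N := fun n =>
    let t := (Mach.trans n i0).get (htot n i0)
    ((i0, t.1), t.2)
  let st : ℕ → N := fun k => Nat.rec n0 (fun _ s => (F s).2) k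
  let pr : ℕ → I × O := fun k => (F (st k)).1
  have hstep : ∀ k, Mach.step (st k) (pr k) = some (st (k + 1)) := by
    intro k
    have h := Option.some_get (htot (st k) i0)
    unfold PreMealy.step
    show (match Mach.trans (st k) (pr k).1 with
      | some (o, m') => if o = (pr k).2 then some m' else none
      | none => none) = some (st (k+1))
    have : (pr k).1 = i0 := rfl
    rw [this, ← h]
    simp only [pr, F, st]
    rfl
  refine ⟨fun k => if h : k < v.length then v.get ⟨k, h⟩ else pr (k - v.length), ?_, ?_⟩
  · -- omegaLang membership
    intro n
    -- prefix of length n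
    rcases le_or_gt n v.length with hle | hlt
    · -- prefix of v
      have hpre : (List.range n).map
          (fun k => if h : k < v.length then v.get ⟨k, h⟩ else pr (k - v.length))
          = v.take n := by
        apply List.ext_getElem
        · simp [hle]
        · intro j h1 h2
          simp only [List.getElem_map, List.getElem_range, List.getElem_take]
          have : j < v.length := by simp at h2; omega
          simp [this]
      rw [PreMealy.lang, Set.mem_setOf_eq, hpre]
      have := runFrom_append Mach (v.take n) (v.drop n) Mach.init
      rw [List.take_append_drop] at this
      rw [hv] at this
      cases hr : Mach.runFrom Mach.init (v.take n) with
      | none => rw [hr] at this; simp at this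
      | some _ => simp [hr]
    · -- v followed by continuation
      obtain ⟨k, rfl⟩ : ∃ k, n = v.length + k := ⟨n - v.length, by omega⟩
      have hcont : ∀ k, Mach.runFrom n0 ((List.range k).map pr) = some (st k) := by
        intro k
        induction k with
        | zero => simp [PreMealy.runFrom, st]
        | succ k ih =>
          rw [List.range_succ, List.map_append, runFrom_append, ih]
          simp [PreMealy.runFrom, hstep k]
      have hsplit : (List.range (v.length + k)).map
          (fun j => if h : j < v.length then v.get ⟨j, h⟩ else pr (j - v.length))
          = v ++ (List.range k).map pr := by
        rw [List.range_add, List.map_append, List.map_map]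
        congr 1
        · apply List.ext_getElem
          · simp
          · intro j h1 h2
            simp only [List.getElem_map, List.getElem_range]
            simp [h2]
        · apply List.ext_getElem
          · simp
          · intro j h1 h2
            simp only [List.getElem_map, List.getElem_range, Function.comp]
            have : ¬ (j + v.length < v.length) := by omega
            simp [this]
      rw [PreMealy.lang, Set.mem_setOf_eq, hsplit, runFrom_append, hv]
      simp [hcont k]
  · apply List.ext_getElem
    · simp
    · intro j h1 h2
      simp only [List.getElem_map, List.getElem_range]
      simp [h2]

/-- If a finite word is accepted by a correct total machine, the safety automaton state
it reaches is not bad. -/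
lemma postW_not_bad [Nonempty I] {N : Type} (A : DetSafety (I ⊕ O) Q)
    (Mach : PreMealy I O N) (htot : Mach.Total)
    (hsub : Mach.omegaLang ⊆ { w | interleave w ∈ A.omegaLang })
    {v : List (I × O)} {n0 : N} (hv : Mach.runFrom Mach.init v = some n0) :
    A.postW A.start (flattenWord v) ∉ A.bad := by
  obtain ⟨w, hw, hpre⟩ := exists_omega_extension Mach htot hv
  have hsafe := hsub hw
  have := hsafe (2 * v.length)
  rw [runOn_two_mul, hpre] at this
  exact this

section Construction

variable {I O M N Q : Type}

/-- The completed machine: run `P` extended with the new edge `(m,i) ↦ (o,m')` on the left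
component, falling back to `Mach` (through `Φ`) on holes. -/
noncomputable def NMmach (P : PreMealy I O M) (Mach : PreMealy I O N) (Φ : M → N)
    (m : M) (i : I) (o : O) (m' : M) : PreMealy I O (M ⊕ N) where
  init := Sum.inl P.init
  trans := fun s j =>
    Sum.elim
      (fun p => (if p = m ∧ j = i then some (o, m') else P.trans p j).elim
        ((Mach.trans (Φ p) j).map (fun t => (t.1, Sum.inr t.2)))
        (fun t => some (t.1, Sum.inl t.2)))
      (fun n => (Mach.trans n j).map (fun t => (t.1, Sum.inr t.2))) s

lemma NM_total (P : PreMealy I O M) (Mach : PreMealy I O N) (Φ : M → N)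
    (m : M) (i : I) (o : O) (m' : M) (htot : Mach.Total) :
    (NMmach P Mach Φ m i o m').Total := by
  rintro (p | n) j
  · simp only [NMmach, Sum.elim_inl]
    cases h : (if p = m ∧ j = i then some (o, m') else P.trans p j) with
    | some t => simp
    | none =>
      simp only [Option.elim]
      have := htot (Φ p) j
      cases hm : Mach.trans (Φ p) j with
      | some t => simp
      | none => rw [hm] at this; simp at this
  · simp only [NMmach, Sum.elim_inr]
    have := htot n j
    cases hm : Mach.trans n j with
    | some t => simp
    | none => rw [hm] at this; simp at this

lemma NM_subgraph (P : PreMealy I O M) (Mach : PreMealy I O N) (Φ : M → N)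
    (m : M) (i : I) (o : O) (m' : M) :
    Subgraph ⟨P.init, fun a b => if a = m ∧ b = i then some (o, m') else P.trans a b⟩
      (NMmach P Mach Φ m i o m') := by
  refine ⟨Sum.inl, fun a b h => by injection h, rfl, ?_⟩
  intro p j o' q
  show (if p = m ∧ j = i then some (o, m') else P.trans p j) = some (o', q) ↔ _
  constructor
  · intro h
    simp only [NMmach, Sum.elim_inl, h, Option.elim]
  · intro h
    simp only [NMmach, Sum.elim_inl] at h
    cases hc : (if p = m ∧ j = i then some (o, m') else P.trans p j) with
    | some t =>
      rw [hc] at h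
      simp only [Option.elim, Option.some.injEq, Prod.mk.injEq] at h
      obtain ⟨h1, h2⟩ := h
      injection h2 with h2
      rw [← h1, ← h2]
    | none =>
      rw [hc] at h
      simp only [Option.elim] at h
      exfalso
      cases hm : Mach.trans (Φ p) j with
      | some t => rw [hm] at h; simp at h
      | none => rw [hm] at h; simp at h

lemma step_eq_some_iff {I O M : Type} (P : PreMealy I O M) (s : M) (x : I × O) (s1 : M) :
    P.step s x = some s1 ↔ P.trans s x.1 = some (x.2, s1) := by
  unfold PreMealy.step
  cases h : P.trans s x.1 with
  | none => simp
  | some t =>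
    obtain ⟨o', q⟩ := t
    by_cases ho : o' = x.2
    · subst ho; simp
    · simp [ho, Ne.symm ho]

lemma runFrom_singleton {I O M : Type} (P : PreMealy I O M) (s : M) (x : I × O) :
    P.runFrom s [x] = P.step s x := by
  cases h : P.step s x <;> simp [PreMealy.runFrom, h]

/-- The run invariant for the completed machine. -/
def InvNM {I O M N Q : Type} (A : DetSafety (I ⊕ O) Q) (P : PreMealy I O M)
    (Mach : PreMealy I O N) : M ⊕ N → Q → Prop := fun s q =>
  Sum.elim
    (fun p => ∃ v, P.runFrom P.init v = some p ∧ A.postW A.start (flattenWord v) = q)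
    (fun n => ∃ v, Mach.runFrom Mach.init v = some n ∧ A.postW A.start (flattenWord v) = q) s

section Invariant

variable {I O M N Q : Type}
variable (A : DetSafety (I ⊕ O) Q) (P : PreMealy I O M) (Mach : PreMealy I O N)
  (Φ : M → N) (m : M) (i : I) (o : O) (m' : M)

lemma NM_step_inv (htot : Mach.Total)
    (hinit : Φ P.init = Mach.init)
    (hΦ : ∀ p i o q, P.trans p i = some (o, q) ↔ Mach.trans (Φ p) i = some (o, Φ q))
    (hpost : (fun q => A.postW q [Sum.inl i, Sum.inr o]) ''
        ((fun u => A.postW A.start (flattenWord u)) '' P.leftLang m)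
      ⊆ (fun u => A.postW A.start (flattenWord u)) '' P.leftLang m')
    (s s1 : M ⊕ N) (q : Q) (x : I × O)
    (hInv : InvNM A P Mach s q)
    (hstep : (NMmach P Mach Φ m i o m').step s x = some s1) :
    InvNM A P Mach s1 (A.postW q [Sum.inl x.1, Sum.inr x.2]) := by
  rw [step_eq_some_iff] at hstep
  cases s with
  | inl p =>
    obtain ⟨v, hv, hq⟩ := hInv
    simp only [NMmach, Sum.elim_inl] at hstep
    cases hc : (if p = m ∧ x.1 = i then some (o, m') else P.trans p x.1) with
    | some t =>
      rw [hc] at hstep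
      simp only [Option.elim, Option.some.injEq, Prod.mk.injEq] at hstep
      obtain ⟨ht1, ht2⟩ := hstep
      by_cases hmi : p = m ∧ x.1 = i
      · -- the new edge
        rw [if_pos hmi] at hc
        injection hc with hc
        subst hc
        simp only at ht1 ht2
        obtain ⟨hpm, hxi⟩ := hmi
        have hmem : A.postW q [Sum.inl i, Sum.inr o] ∈
            (fun q => A.postW q [Sum.inl i, Sum.inr o]) ''
              ((fun u => A.postW A.start (flattenWord u)) '' P.leftLang m) := by
          refine ⟨A.postW A.start (flattenWord v), ⟨v, ?_, rfl⟩, by rw [hq]⟩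
          · rw [PreMealy.leftLang, Set.mem_setOf_eq, hv, hpm]
        obtain ⟨v', hv', heq⟩ := hpost hmem
        have heq' : A.postW A.start (flattenWord v') = A.postW q [Sum.inl i, Sum.inr o] := heq
        rw [← ht2]
        refine ⟨v', hv', ?_⟩
        rw [hxi, ← ht1]
        exact heq'
      · rw [if_neg hmi] at hc
        rw [← ht2]
        refine ⟨v ++ [x], ?_, ?_⟩
        · rw [runFrom_append, hv, Option.bind_some, runFrom_singleton, step_eq_some_iff,
            hc, ← ht1]
        · rw [flattenWord_append, postW_append, hq]
          simp [flattenWord]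
    | none =>
      rw [hc] at hstep
      simp only [Option.elim] at hstep
      obtain ⟨t0, ht0⟩ := Option.isSome_iff_exists.mp (htot (Φ p) x.1)
      rw [ht0, Option.map_some] at hstep
      simp only [Option.some.injEq, Prod.mk.injEq] at hstep
      obtain ⟨ht1, ht2⟩ := hstep
      rw [← ht2]
      refine ⟨v ++ [x], ?_, ?_⟩
      · rw [runFrom_append, ← hinit, runFrom_lift hΦ v P.init p hv, Option.bind_some,
          runFrom_singleton, step_eq_some_iff, ht0, ← ht1]
      · rw [flattenWord_append, postW_append, hq]
        simp [flattenWord]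
  | inr n =>
    obtain ⟨v, hv, hq⟩ := hInv
    simp only [NMmach, Sum.elim_inr] at hstep
    obtain ⟨t0, ht0⟩ := Option.isSome_iff_exists.mp (htot n x.1)
    rw [ht0, Option.map_some] at hstep
    simp only [Option.some.injEq, Prod.mk.injEq] at hstep
    obtain ⟨ht1, ht2⟩ := hstep
    rw [← ht2]
    refine ⟨v ++ [x], ?_, ?_⟩
    · rw [runFrom_append, hv, Option.bind_some, runFrom_singleton, step_eq_some_iff,
        ht0, ← ht1]
    · rw [flattenWord_append, postW_append, hq]
      simp [flattenWord]

end Invariant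

/-- key lemma for termination of the completion procedure. If `L(A)` is
`P`-realizable, `(m,i)` is a hole of `P`, and `Post*_A(R_m, i·o) ⊆ R_{m'}`, then `L(A)`
is `P'`-realizable, where `P'` is `P` with the added transition `(m,i) ↦ (o,m')`. -/
theorem stmt14 {I O M Q : Type} [Fintype I] [Nonempty I] [Fintype O] [Nonempty O]
    [Fintype M] [Fintype Q]
    (A : DetSafety (I ⊕ O) Q) (P : PreMealy I O M)
    (hreal : PRealizable P { w | interleave w ∈ A.omegaLang })
    (m : M) (i : I) (hhole : P.Hole m i) (o : O) (m' : M)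
    (hpost : (fun q => A.postW q [Sum.inl i, Sum.inr o]) ''
        ((fun u => A.postW A.start (flattenWord u)) '' P.leftLang m)
      ⊆ (fun u => A.postW A.start (flattenWord u)) '' P.leftLang m') :
    PRealizable
      ⟨P.init, fun a b => if a = m ∧ b = i then some (o, m') else P.trans a b⟩
      { w | interleave w ∈ A.omegaLang } := by
  obtain ⟨N, finN, Mach, htot, ⟨Φ, hinj, hinit, hΦ⟩, hsub⟩ := hreal
  refine ⟨M ⊕ N, inferInstance, NMmach P Mach Φ m i o m',
    NM_total P Mach Φ m i o m' htot, NM_subgraph P Mach Φ m i o m', ?_⟩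
  have runinv : ∀ (u : List (I × O)) (s s1 : M ⊕ N) (q : Q),
      InvNM A P Mach s q → (NMmach P Mach Φ m i o m').runFrom s u = some s1 →
      InvNM A P Mach s1 (A.postW q (flattenWord u)) := by
    intro u
    induction u with
    | nil =>
      intro s s1 q hI h
      simp only [PreMealy.runFrom, Option.some.injEq] at h
      subst h
      simpa [flattenWord, DetSafety.postW] using hI
    | cons x u ih =>
      intro s s1 q hI h
      simp only [PreMealy.runFrom] at h
      cases hs : (NMmach P Mach Φ m i o m').step s x with
      | none => rw [hs] at h; exact absurd h (by simp)
      | some s2 =>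
        rw [hs] at h
        have h2 := NM_step_inv A P Mach Φ m i o m' htot hinit hΦ hpost s s2 q x hI hs
        have h3 := ih s2 s1 _ h2 h
        have hf : flattenWord (x :: u) = [Sum.inl x.1, Sum.inr x.2] ++ flattenWord u := by
          simp [flattenWord]
        rw [hf, postW_append]
        exact h3
  intro w hw
  simp only [Set.mem_setOf_eq, DetSafety.omegaLang]
  have heven : ∀ n, A.runOn (interleave w) (2 * n) ∉ A.bad := by
    intro n
    rw [runOn_two_mul]
    have hwn := hw n
    rw [PreMealy.lang, Set.mem_setOf_eq] at hwn
    obtain ⟨s, hs⟩ := Option.isSome_iff_exists.mp hwn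
    have hInv0 : InvNM A P Mach (NMmach P Mach Φ m i o m').init A.start :=
      ⟨[], rfl, rfl⟩
    have hInv := runinv _ _ s A.start hInv0 hs
    cases s with
    | inl p =>
      obtain ⟨v, hv, hqe⟩ := hInv
      have hlift := runFrom_lift hΦ v P.init p hv
      rw [hinit] at hlift
      rw [← hqe]
      exact postW_not_bad A Mach htot hsub hlift
    | inr n' =>
      obtain ⟨v, hv, hqe⟩ := hInv
      rw [← hqe]
      exact postW_not_bad A Mach htot hsub hv
  intro k
  rcases Nat.even_or_odd k with ⟨n, hn⟩ | ⟨n, hn⟩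
  · have : k = 2 * n := by omega
    rw [this]
    exact heven n
  · intro hbad
    have hb : A.runOn (interleave w) (2 * n + 1) ∈ A.bad := by rw [← hn]; exact hbad
    have hb2 : A.runOn (interleave w) (2 * n + 1 + 1) ∈ A.bad :=
      A.trap _ hb _
    have e : 2 * (n + 1) = 2 * n + 1 + 1 := by ring
    exact heven (n + 1) (by rw [e]; exact hb2)
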